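/- Let n ≥ 2, r > 0, and let q : Fin n → ℝ be nonnegative with ∑ q_i = n. Then (r/n) · ∑_i 1/(r + q_i) ≤ 1 - 1/(r + n). -/

import Mathlib

/-- If `n ≥ 2`, `r > 0` and `q : Fin n → ℝ` is nonnegative with `∑ q i = n`, then
`(r/n) · ∑ i, 1/(r + q i) ≤ 1 - 1/(r + n)`. -/
theorem stmt_0 (n : ℕ) (hn : 2 ≤ n) (r : ℝ) (hr : 0 < r) (q : Fin n → ℝ)
    (hq : ∀ i, 0 ≤ q i) (hsum : ∑ i, q i = (n : ℝ)) :
    (r / n) * ∑ i, 1 / (r + q i) ≤ 1 - 1 / (r + n) := by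
  have hn0 : (0:ℝ) < n := by positivity
  have hrn : (0:ℝ) < r + n := by positivity
  have hqn : ∀ i, q i ≤ n := by
    intro i
    rw [← hsum]
    exact Finset.single_le_sum (fun j _ => hq j) (Finset.mem_univ i)
  have key : ∀ i, 1 / (r + q i) ≤ 1 / r - q i / (r * (r + n)) := by
    intro i
    have h1 : (0:ℝ) < r + q i := by have := hq i; linarith
    have h2 : q i * (n - q i) ≥ 0 := mul_nonneg (hq i) (by linarith [hqn i])
    rw [div_sub_div _ _ (ne_of_gt hr) (by positivity), div_le_div_iff₀ h1 (by positivity)]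
    nlinarith [hq i, hqn i]
  have hsum2 : ∑ i, 1 / (r + q i) ≤ (n : ℝ) / r - n / (r * (r + n)) := by
    calc ∑ i, 1 / (r + q i) ≤ ∑ i, (1 / r - q i / (r * (r + n))) :=
          Finset.sum_le_sum (fun i _ => key i)
      _ = (n : ℝ) / r - n / (r * (r + n)) := by
          rw [Finset.sum_sub_distrib, Finset.sum_const, ← Finset.sum_div, hsum]
          simp [div_eq_mul_inv]
  have h3 : 0 < r / n := by positivity
  calc (r / n) * ∑ i, 1 / (r + q i) ≤ (r / n) * ((n : ℝ) / r - n / (r * (r + n))) :=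
        mul_le_mul_of_nonneg_left hsum2 (le_of_lt h3)
    _ = 1 - 1 / (r + n) := by field_simp
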